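/- Let T be the m-linear Riesz transform with kernel K(x, y⃗) = (Σ_{j=1}^m (x¹ − y_j¹)) / (Σ_{j=1}^m |x − y_j|)^{md+1} on ℝ^d, and for a cube Q set Q' := Q + 2m ℓ(Q) e_1. Then there is a constant C depending only on m and d such that: (a) for all nonnegative h_1,…,h_m ∈ L^∞_c supported in Q' with ∏_j h_j = 1_{Q'}, one has 1 ≤ C |T(h⃗)(x)| for a.e. x ∈ Q; moreover (b) for all x ∈ Q' and y⃗ ∈ Q^m, K(x, y⃗) ≥ C^{-1} |Q|^{-m}. -/

import Mathlib

open MeasureTheory ENNReal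

/-- The axis-parallel cube in `ℝ^d` with corner `a` and side length `ℓ`. -/
def cube {d : ℕ} (a : Fin d → ℝ) (ℓ : ℝ) : Set (Fin d → ℝ) :=
  {x | ∀ i, a i ≤ x i ∧ x i ≤ a i + ℓ}

/-- The Euclidean norm of a point of `ℝ^d`. -/
noncomputable def ednorm {d : ℕ} (x : Fin d → ℝ) : ℝ :=
  Real.sqrt (∑ i, x i ^ 2)

/-- The kernel of the `m`-linear Riesz transform of the first coordinate:
`K(x, y⃗) = (Σ_j (x¹ − y_j¹)) / (Σ_j |x − y_j|)^{md+1}`. -/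
noncomputable def rieszKernel {d m : ℕ} (hd : 0 < d)
    (x : Fin d → ℝ) (y : Fin m → Fin d → ℝ) : ℝ :=
  (∑ j, (x ⟨0, hd⟩ - y j ⟨0, hd⟩)) / (∑ j, ednorm (x - y j)) ^ (m * d + 1)

lemma cube_eq_pi {d : ℕ} (a : Fin d → ℝ) (ℓ : ℝ) :
    cube a ℓ = Set.univ.pi fun i => Set.Icc (a i) (a i + ℓ) := by
  ext x; simp [cube, Set.mem_pi, Pi.le_def, forall_and]

lemma measurableSet_cube {d : ℕ} (a : Fin d → ℝ) (ℓ : ℝ) : MeasurableSet (cube a ℓ) := by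
  rw [cube_eq_pi]; exact MeasurableSet.univ_pi fun i => measurableSet_Icc

lemma volume_cube {d : ℕ} (a : Fin d → ℝ) {ℓ : ℝ} (hℓ : 0 ≤ ℓ) :
    volume (cube a ℓ) = ENNReal.ofReal (ℓ ^ d) := by
  rw [cube_eq_pi, volume_pi_pi]
  simp [Real.volume_Icc, ← ENNReal.ofReal_pow hℓ]

lemma ednorm_nonneg {d : ℕ} (x : Fin d → ℝ) : 0 ≤ ednorm x := Real.sqrt_nonneg _

lemma abs_le_ednorm {d : ℕ} (x : Fin d → ℝ) (i : Fin d) : |x i| ≤ ednorm x := by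
  rw [← Real.sqrt_sq_eq_abs]
  exact Real.sqrt_le_sqrt (Finset.single_le_sum (fun j _ => sq_nonneg (x j)) (Finset.mem_univ i))

lemma ednorm_le {d : ℕ} {x : Fin d → ℝ} {b : ℝ} (hb : 0 ≤ b) (h : ∀ i, |x i| ≤ b) :
    ednorm x ≤ Real.sqrt d * b := by
  have : ednorm x ≤ Real.sqrt (∑ _i : Fin d, b ^ 2) := by
    apply Real.sqrt_le_sqrt
    exact Finset.sum_le_sum fun i _ => sq_le_sq' (by linarith [(abs_le.1 (h i)).1]) (abs_le.1 (h i)).2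
  calc ednorm x ≤ Real.sqrt (∑ _i : Fin d, b ^ 2) := this
    _ = Real.sqrt d * b := by
        rw [Finset.sum_const, Finset.card_univ, Fintype.card_fin, nsmul_eq_mul,
          Real.sqrt_mul (by positivity), Real.sqrt_sq hb]


lemma sum_const_fin (m : ℕ) (c : ℝ) : ∑ _j : Fin m, c = m * c := by
  rw [Finset.sum_const, Finset.card_univ, Fintype.card_fin, nsmul_eq_mul]

lemma denom_bounds {d m : ℕ} (hd : 0 < d) {ℓ : ℝ} (hℓ : 0 < ℓ)
    {x : Fin d → ℝ} {y : Fin m → Fin d → ℝ}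
    (h1 : ∀ j, ℓ ≤ |x ⟨0, hd⟩ - y j ⟨0, hd⟩|)
    (h2 : ∀ j i, |x i - y j i| ≤ (2 * m + 1) * ℓ) :
    m * ℓ ≤ ∑ j, ednorm (x - y j) ∧
      ∑ j, ednorm (x - y j) ≤ m * (Real.sqrt d * ((2 * m + 1) * ℓ)) := by
  constructor
  · rw [← sum_const_fin m ℓ]
    exact Finset.sum_le_sum fun j _ =>
      le_trans (h1 j) (by simpa using abs_le_ednorm (x - y j) ⟨0, hd⟩)
  · rw [← sum_const_fin m (Real.sqrt d * ((2 * m + 1) * ℓ))]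
    exact Finset.sum_le_sum fun j _ =>
      ednorm_le (by positivity) (fun i => by simpa using h2 j i)

lemma riesz_lb {d m : ℕ} (hd : 0 < d) (hm : 0 < m) {ℓ : ℝ} (hℓ : 0 < ℓ)
    {x : Fin d → ℝ} {y : Fin m → Fin d → ℝ}
    (h1 : ∀ j, ℓ ≤ x ⟨0, hd⟩ - y j ⟨0, hd⟩)
    (h2 : ∀ j i, |x i - y j i| ≤ (2 * m + 1) * ℓ) :
    (m / (m * (Real.sqrt d * (2 * m + 1))) ^ (m * d + 1)) / ℓ ^ (m * d)
      ≤ rieszKernel hd x y := by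
  set A := Real.sqrt d * (2 * m + 1) with hA
  have hApos : 0 < A := by
    have : (0:ℝ) < Real.sqrt d := Real.sqrt_pos.2 (by exact_mod_cast hd)
    positivity
  have hm' : (0:ℝ) < m := by exact_mod_cast hm
  obtain ⟨hlo, hhi⟩ := denom_bounds hd hℓ (fun j => (h1 j).trans (le_abs_self _)) h2
  have hhi' : ∑ j, ednorm (x - y j) ≤ m * A * ℓ := by
    calc _ ≤ m * (Real.sqrt d * ((2 * m + 1) * ℓ)) := hhi
      _ = m * A * ℓ := by rw [hA]; ring
  have hmℓ : (0:ℝ) < m * ℓ := by positivity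
  have hdenpos : 0 < ∑ j, ednorm (x - y j) := lt_of_lt_of_le hmℓ hlo
  have hnum : m * ℓ ≤ ∑ j, (x ⟨0, hd⟩ - y j ⟨0, hd⟩) := by
    rw [← sum_const_fin m ℓ]; exact Finset.sum_le_sum fun j _ => h1 j
  rw [rieszKernel]
  have key : m * ℓ / (m * A * ℓ) ^ (m * d + 1)
      ≤ (∑ j, (x ⟨0, hd⟩ - y j ⟨0, hd⟩)) / (∑ j, ednorm (x - y j)) ^ (m * d + 1) :=
    div_le_div₀ (le_trans hmℓ.le hnum) hnum (pow_pos hdenpos _)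
      (pow_le_pow_left₀ hdenpos.le hhi' _)
  refine le_trans (le_of_eq ?_) key
  have h1' : (↑m * A) ^ (m * d + 1) ≠ 0 := by positivity
  have h3' : ℓ ^ (m * d) ≠ 0 := by positivity
  rw [mul_pow (↑m * A) ℓ, pow_succ ℓ (m * d)]
  field_simp

lemma riesz_ub {d m : ℕ} (hd : 0 < d) (hm : 0 < m) {ℓ : ℝ} (hℓ : 0 < ℓ)
    {x : Fin d → ℝ} {y : Fin m → Fin d → ℝ}
    (h1 : ∀ j, ℓ ≤ y j ⟨0, hd⟩ - x ⟨0, hd⟩)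
    (h2 : ∀ j i, |x i - y j i| ≤ (2 * m + 1) * ℓ) :
    rieszKernel hd x y ≤ -((m / (m * (Real.sqrt d * (2 * m + 1))) ^ (m * d + 1)) / ℓ ^ (m * d)) ∧
      |rieszKernel hd x y| ≤ (m * (2 * m + 1) / (m : ℝ) ^ (m * d + 1)) / ℓ ^ (m * d) := by
  set A := Real.sqrt d * (2 * m + 1) with hA
  have hApos : 0 < A := by
    have : (0:ℝ) < Real.sqrt d := Real.sqrt_pos.2 (by exact_mod_cast hd)
    positivity
  have hm' : (0:ℝ) < m := by exact_mod_cast hm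
  obtain ⟨hlo, hhi⟩ := denom_bounds hd hℓ
    (fun j => le_trans (h1 j) (by rw [abs_sub_comm]; exact le_abs_self _)) h2
  have hhi' : ∑ j, ednorm (x - y j) ≤ m * A * ℓ := by
    calc _ ≤ m * (Real.sqrt d * ((2 * m + 1) * ℓ)) := hhi
      _ = m * A * ℓ := by rw [hA]; ring
  have hmℓ : (0:ℝ) < m * ℓ := by positivity
  have hdenpos : 0 < ∑ j, ednorm (x - y j) := lt_of_lt_of_le hmℓ hlo
  have hnum : (∑ j, (x ⟨0, hd⟩ - y j ⟨0, hd⟩)) ≤ -(m * ℓ) := by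
    have h := Finset.sum_le_sum (f := fun j => x ⟨0, hd⟩ - y j ⟨0, hd⟩)
      (g := fun _ : Fin m => -ℓ) (fun j (_ : j ∈ Finset.univ) => by linarith [h1 j])
    rw [sum_const_fin m (-ℓ)] at h
    linarith
  have hnum_abs : |∑ j, (x ⟨0, hd⟩ - y j ⟨0, hd⟩)| ≤ m * ((2 * m + 1) * ℓ) := by
    calc |∑ j, (x ⟨0, hd⟩ - y j ⟨0, hd⟩)| ≤ ∑ j, |x ⟨0, hd⟩ - y j ⟨0, hd⟩| :=
        Finset.abs_sum_le_sum_abs _ _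
      _ ≤ ∑ _j : Fin m, (2 * m + 1) * ℓ := Finset.sum_le_sum fun j _ => h2 j _
      _ = m * ((2 * m + 1) * ℓ) := sum_const_fin m _
  have hDpos : (0:ℝ) < (m * A * ℓ) ^ (m * d + 1) := by positivity
  constructor
  · rw [rieszKernel]
    have step1 : (∑ j, (x ⟨0, hd⟩ - y j ⟨0, hd⟩)) / (∑ j, ednorm (x - y j)) ^ (m * d + 1)
        ≤ (∑ j, (x ⟨0, hd⟩ - y j ⟨0, hd⟩)) / (m * A * ℓ) ^ (m * d + 1) := by
      rw [div_le_div_iff₀ (pow_pos hdenpos _) hDpos]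
      exact mul_le_mul_of_nonpos_left (pow_le_pow_left₀ hdenpos.le hhi' _)
        (by linarith : (∑ j, (x ⟨0, hd⟩ - y j ⟨0, hd⟩)) ≤ 0)
    have step2 : (∑ j, (x ⟨0, hd⟩ - y j ⟨0, hd⟩)) / (m * A * ℓ) ^ (m * d + 1)
        ≤ (-(m * ℓ)) / (m * A * ℓ) ^ (m * d + 1) := by
      rw [div_le_div_iff₀ hDpos hDpos]
      exact mul_le_mul_of_nonneg_right hnum hDpos.le
    refine le_trans (step1.trans step2) (le_of_eq ?_)
    have h1' : (↑m * A) ^ (m * d + 1) ≠ 0 := by positivity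
    have h3' : ℓ ^ (m * d) ≠ 0 := by positivity
    rw [mul_pow (↑m * A) ℓ, pow_succ ℓ (m * d)]
    field_simp
  · rw [rieszKernel, abs_div, abs_of_pos (pow_pos hdenpos _)]
    have key : |∑ j, (x ⟨0, hd⟩ - y j ⟨0, hd⟩)| / (∑ j, ednorm (x - y j)) ^ (m * d + 1)
        ≤ (m * ((2 * m + 1) * ℓ)) / (m * ℓ) ^ (m * d + 1) :=
      div_le_div₀ (by positivity) hnum_abs (pow_pos hmℓ _)
        (pow_le_pow_left₀ hmℓ.le hlo _)
    refine key.trans (le_of_eq ?_)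
    have h1' : (m:ℝ) ^ (m * d + 1) ≠ 0 := by positivity
    have h3' : ℓ ^ (m * d) ≠ 0 := by positivity
    rw [mul_pow (m:ℝ) ℓ, pow_succ ℓ (m * d)]
    field_simp

lemma prod_integral_ge {d m : ℕ} (hm : 0 < m) {Q' : Set (Fin d → ℝ)}
    (hQ'meas : MeasurableSet Q') (hQ'fin : volume Q' ≠ ⊤)
    {h : Fin m → (Fin d → ℝ) → ℝ}
    (hpos : ∀ j x, 0 ≤ h j x) (hmeas : ∀ j, Measurable (h j))
    (hbd : ∀ j, ∃ M : ℝ, ∀ x, h j x ≤ M)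
    (hsupp : ∀ j, ∀ x ∉ Q', h j x = 0)
    (hprod : ∀ x, ∏ j, h j x = Q'.indicator (fun _ => (1:ℝ)) x) :
    (volume Q').toReal ^ m ≤ ∏ j, ∫ x, h j x := by
  have hmR : (0:ℝ) < m := Nat.cast_pos.2 hm
  set F : Fin m → (Fin d → ℝ) → ℝ≥0∞ := fun j x => ENNReal.ofReal (h j x) with hF
  set L : Fin m → ℝ≥0∞ := fun j => ∫⁻ x, F j x with hL
  have hFmeas : ∀ j ∈ Finset.univ, AEMeasurable (F j) (volume : Measure (Fin d → ℝ)) :=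
    fun j _ => ((hmeas j).ennreal_ofReal).aemeasurable
  have hp : ∑ _j : Fin m, (1 / m : ℝ) = 1 := by
    rw [sum_const_fin]; field_simp
  have hHolder := ENNReal.lintegral_prod_norm_pow_le (μ := volume) Finset.univ hFmeas hp
    (fun _ _ => by positivity)
  have hpt : ∀ x, ∏ j, F j x ^ (1 / m : ℝ) = Q'.indicator (fun _ => (1:ℝ≥0∞)) x := by
    intro x
    rw [ENNReal.prod_rpow_of_nonneg (by positivity),
      ← ENNReal.ofReal_prod_of_nonneg (fun j _ => hpos j x), hprod x]
    by_cases hx : x ∈ Q'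
    · simp [hx]
    · simp [hx, ENNReal.zero_rpow_of_pos (by positivity : (0:ℝ) < 1 / m), hm]
  have hLHS : ∫⁻ x, ∏ j, F j x ^ (1 / m : ℝ) = volume Q' := by
    simp_rw [hpt]
    exact lintegral_indicator_one hQ'meas
  rw [hLHS] at hHolder
  -- raise to power m
  have hpm : ∀ z : ℝ≥0∞, (z ^ (1 / m : ℝ)) ^ m = z := by
    intro z
    rw [← ENNReal.rpow_natCast (z ^ (1 / m : ℝ)) m, ← ENNReal.rpow_mul, one_div,
      inv_mul_cancel₀ (by exact_mod_cast hm.ne' : (m:ℝ) ≠ 0), ENNReal.rpow_one]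
  have hpow : volume Q' ^ m ≤ ∏ j, L j := by
    calc volume Q' ^ m ≤ (∏ j, L j ^ (1 / m : ℝ)) ^ m := pow_le_pow_left' hHolder m
      _ = ∏ j, (L j ^ (1 / m : ℝ)) ^ m := by rw [Finset.prod_pow]
      _ = ∏ j, L j := Finset.prod_congr rfl fun j _ => hpm (L j)
  -- finiteness
  have hLfin : ∀ j, L j ≠ ⊤ := by
    intro j
    obtain ⟨M, hM⟩ := hbd j
    have : L j ≤ ENNReal.ofReal M * volume Q' := by
      rw [← lintegral_indicator_const hQ'meas]
      refine lintegral_mono fun x => ?_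
      by_cases hx : x ∈ Q'
      · simpa [hF, hx] using ENNReal.ofReal_le_ofReal (hM x)
      · simp [hF, hx, hsupp j x hx]
    exact ne_top_of_le_ne_top (ENNReal.mul_ne_top ENNReal.ofReal_ne_top hQ'fin) this
  have hint : ∀ j, ∫ x, h j x = (L j).toReal := fun j =>
    integral_eq_lintegral_of_nonneg_ae (Filter.Eventually.of_forall (hpos j))
      (hmeas j).aestronglyMeasurable
  calc (volume Q').toReal ^ m = (volume Q' ^ m).toReal := (ENNReal.toReal_pow _ _).symm
    _ ≤ (∏ j, L j).toReal := ENNReal.toReal_mono (ENNReal.prod_ne_top fun j _ => hLfin j) hpow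
    _ = ∏ j, (L j).toReal := ENNReal.toReal_prod _ _
    _ = ∏ j, ∫ x, h j x := Finset.prod_congr rfl fun j _ => (hint j).symm

lemma geom {d m : ℕ} (hd : 0 < d) (hm : 0 < m) {a : Fin d → ℝ} {ℓ : ℝ} (hℓ : 0 < ℓ)
    {u v : Fin d → ℝ} (hu : u ∈ cube a ℓ)
    (hv : v ∈ cube (fun i => a i + if i = (⟨0, hd⟩ : Fin d) then 2 * m * ℓ else 0) ℓ) :
    ℓ ≤ v ⟨0, hd⟩ - u ⟨0, hd⟩ ∧ ∀ i, |u i - v i| ≤ (2 * m + 1) * ℓ := by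
  have hm1 : (1:ℝ) ≤ m := Nat.one_le_cast.2 hm
  refine ⟨?_, fun i => ?_⟩
  · have h1 := hu ⟨0, hd⟩
    have h2 := hv ⟨0, hd⟩
    simp only [if_pos rfl, if_true] at h2
    nlinarith [h1.1, h1.2, h2.1, h2.2]
  · have h1 := hu i
    have h2 := hv i
    by_cases hi : i = ⟨0, hd⟩
    · subst hi
      simp only [if_pos rfl, if_true] at h2
      rw [abs_le]; constructor <;> nlinarith [h1.1, h1.2, h2.1, h2.2]
    · simp only [if_neg hi] at h2
      rw [abs_le]; constructor <;> nlinarith [h1.1, h1.2, h2.1, h2.2]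


/-- **Directional nondegeneracy of the multilinear Riesz transform** (Example 8.6).
Let `T` be the `m`-linear Riesz transform of the first coordinate and, for a cube `Q`, let
`Q' = Q + 2mℓ(Q)e₁`.  There is a constant `C > 0` depending only on `m` and `d` such that:
(a) for all bounded nonnegative `h_1,…,h_m` supported in `Q'` with `∏_j h_j = 1_{Q'}`, one has
`1 ≤ C·|T(h⃗)(x)|` for a.e. `x ∈ Q`; and (b) `K(x,y⃗) ≥ C⁻¹|Q|⁻ᵐ` for all `x ∈ Q'`, `y⃗ ∈ Qᵐ`. -/
theorem riesz_transform_nondegenerate {d m : ℕ} (hd : 0 < d) (hm : 0 < m) :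
    ∃ C : ℝ, 0 < C ∧
      ∀ (a : Fin d → ℝ) (ℓ : ℝ), 0 < ℓ →
        -- the translated cube `Q' = Q + 2mℓ e₁`
        (∀ h : Fin m → (Fin d → ℝ) → ℝ,
          (∀ j x, 0 ≤ h j x) →
          (∀ j, Measurable (h j)) →
          (∀ j, ∃ M : ℝ, ∀ x, h j x ≤ M) →
          (∀ j, ∀ x ∉ cube (fun i => a i + if i = ⟨0, hd⟩ then 2 * m * ℓ else 0) ℓ,
            h j x = 0) →
          (∀ x : Fin d → ℝ, ∏ j, h j x =
            Set.indicator (cube (fun i => a i + if i = ⟨0, hd⟩ then 2 * m * ℓ else 0) ℓ)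
              (fun _ => (1 : ℝ)) x) →
          ∀ᵐ x : Fin d → ℝ, x ∈ cube a ℓ →
            1 ≤ C * |∫ y : Fin m → Fin d → ℝ, rieszKernel hd x y * ∏ j, h j (y j)|) ∧
        (∀ x ∈ cube (fun i => a i + if i = ⟨0, hd⟩ then 2 * m * ℓ else 0) ℓ,
          ∀ y : Fin m → Fin d → ℝ, (∀ j, y j ∈ cube a ℓ) →
            C⁻¹ * ((volume (cube a ℓ)).toReal) ⁻¹ ^ m ≤ rieszKernel hd x y) := by
  have hm' : (0:ℝ) < m := Nat.cast_pos.2 hm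
  have hsd : (0:ℝ) < Real.sqrt d := Real.sqrt_pos.2 (Nat.cast_pos.2 hd)
  set c : ℝ := m / (m * (Real.sqrt d * (2 * m + 1))) ^ (m * d + 1) with hc
  have hcpos : 0 < c := by positivity
  refine ⟨c⁻¹, inv_pos.2 hcpos, fun a ℓ hℓ => ⟨?_, ?_⟩⟩
  · -- part (a)
    intro h hpos hmeas hbd hsupp hprod
    set Q' : Set (Fin d → ℝ) := cube (fun i => a i + if i = ⟨0, hd⟩ then 2 * m * ℓ else 0) ℓ
      with hQ'
    have hQ'meas : MeasurableSet Q' := measurableSet_cube _ _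
    have hQ'vol : volume Q' = ENNReal.ofReal (ℓ ^ d) := volume_cube _ hℓ.le
    have hQ'fin : volume Q' ≠ ⊤ := by rw [hQ'vol]; exact ENNReal.ofReal_ne_top
    have hH : ℓ ^ (d * m) ≤ ∏ j, ∫ x, h j x := by
      have := prod_integral_ge hm hQ'meas hQ'fin hpos hmeas hbd hsupp hprod
      rwa [hQ'vol, ENNReal.toReal_ofReal (by positivity), ← pow_mul] at this
    have hIh : ∀ j, Integrable (h j) := by
      intro j
      obtain ⟨M, hM⟩ := hbd j
      refine Integrable.mono' (g := fun x => Q'.indicator (fun _ => M) x) ?_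
        (hmeas j).aestronglyMeasurable (Filter.Eventually.of_forall fun x => ?_)
      · rw [integrable_indicator_iff hQ'meas]
        exact integrableOn_const (by rw [hQ'vol]; exact ENNReal.ofReal_ne_top)
      · by_cases hx' : x ∈ Q'
        · simpa [Set.indicator_of_mem hx', Real.norm_eq_abs, abs_of_nonneg (hpos j x)]
            using hM x
        · simp [Set.indicator_of_notMem hx', hsupp j x hx']
    have hIg : Integrable (fun y : Fin m → Fin d → ℝ => ∏ j, h j (y j)) :=
      Integrable.fintype_prod (𝕜 := ℝ) hIh
    refine Filter.Eventually.of_forall fun x hx => ?_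
    have hgmeas : Measurable (fun y : Fin m → Fin d → ℝ => ∏ j, h j (y j)) :=
      Finset.measurable_prod _ fun j _ => (hmeas j).comp (measurable_pi_apply j)
    have hKmeas : Measurable fun y : Fin m → Fin d → ℝ => rieszKernel hd x y := by
      unfold rieszKernel ednorm
      simp only [Pi.sub_apply]
      refine Measurable.div ?_ ((Finset.measurable_sum _ fun j _ => ?_).pow_const _)
      · exact Finset.measurable_sum _ fun j _ =>
          measurable_const.sub ((measurable_pi_apply _).comp (measurable_pi_apply j))
      · exact Real.continuous_sqrt.measurable.comp <| Finset.measurable_sum _ fun i _ =>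
          by
            have h1 : Measurable fun y : Fin m → Fin d → ℝ => y j i :=
              (measurable_pi_apply i).comp (measurable_pi_apply j)
            exact (h1.const_sub (x i)).pow_const 2
    -- pointwise bounds
    have hge : ∀ y : Fin m → Fin d → ℝ, (∀ j, y j ∈ Q') ∨ (∏ j, h j (y j)) = 0 := by
      intro y
      by_cases hy : ∀ j, y j ∈ Q'
      · exact Or.inl hy
      · push_neg at hy
        obtain ⟨j, hj⟩ := hy
        exact Or.inr (Finset.prod_eq_zero (Finset.mem_univ j) (hsupp j _ hj))
    have hprodnn : ∀ y : Fin m → Fin d → ℝ, 0 ≤ ∏ j, h j (y j) :=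
      fun y => Finset.prod_nonneg fun j _ => hpos j (y j)
    have hpw : ∀ y : Fin m → Fin d → ℝ, rieszKernel hd x y * ∏ j, h j (y j) ≤
        (-(c / ℓ ^ (m * d))) * ∏ j, h j (y j) := by
      intro y
      rcases hge y with hy | hy
      · refine mul_le_mul_of_nonneg_right ?_ (hprodnn y)
        exact (riesz_ub hd hm hℓ (fun j => (geom hd hm hℓ hx (hy j)).1)
          (fun j => (geom hd hm hℓ hx (hy j)).2)).1
      · simp [hy]
    have hpwabs : ∀ y : Fin m → Fin d → ℝ, ‖rieszKernel hd x y * ∏ j, h j (y j)‖ ≤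
        ((m * (2 * m + 1) / (m : ℝ) ^ (m * d + 1)) / ℓ ^ (m * d)) * ∏ j, h j (y j) := by
      intro y
      rcases hge y with hy | hy
      · rw [Real.norm_eq_abs, abs_mul, abs_of_nonneg (hprodnn y)]
        refine mul_le_mul_of_nonneg_right ?_ (hprodnn y)
        exact (riesz_ub hd hm hℓ (fun j => (geom hd hm hℓ hx (hy j)).1)
          (fun j => (geom hd hm hℓ hx (hy j)).2)).2
      · simp [hy]
    have hIf : Integrable (fun y : Fin m → Fin d → ℝ =>
        rieszKernel hd x y * ∏ j, h j (y j)) := by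
      refine Integrable.mono' (hIg.const_mul _) ((hKmeas.mul hgmeas).aestronglyMeasurable)
        (Filter.Eventually.of_forall hpwabs)
    have hInt : ∫ y : Fin m → Fin d → ℝ, rieszKernel hd x y * ∏ j, h j (y j) ≤ -c := by
      calc ∫ y : Fin m → Fin d → ℝ, rieszKernel hd x y * ∏ j, h j (y j)
          ≤ ∫ y : Fin m → Fin d → ℝ, (-(c / ℓ ^ (m * d))) * ∏ j, h j (y j) :=
            integral_mono hIf (hIg.const_mul _) hpw
        _ = (-(c / ℓ ^ (m * d))) * ∏ j, ∫ x, h j x := by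
            rw [integral_const_mul, integral_fintype_prod_volume_eq_prod (ι := Fin m) (fun j => h j)]
        _ ≤ (-(c / ℓ ^ (m * d))) * ℓ ^ (d * m) := by
            exact mul_le_mul_of_nonpos_left hH (neg_nonpos.2 (by positivity))
        _ = -c := by
            rw [mul_comm d m]
            field_simp
    have habs : c ≤ |∫ y : Fin m → Fin d → ℝ, rieszKernel hd x y * ∏ j, h j (y j)| :=
      le_abs.2 (Or.inr (by linarith))
    calc (1:ℝ) = c⁻¹ * c := by field_simp
      _ ≤ c⁻¹ * |∫ y : Fin m → Fin d → ℝ, rieszKernel hd x y * ∏ j, h j (y j)| :=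
        mul_le_mul_of_nonneg_left habs (by positivity)
  · -- part (b)
    intro x hx y hy
    have hgoal : c⁻¹⁻¹ * ((volume (cube a ℓ)).toReal)⁻¹ ^ m = c / ℓ ^ (m * d) := by
      rw [inv_inv, volume_cube a hℓ.le, ENNReal.toReal_ofReal (by positivity),
        ← inv_pow, ← pow_mul, mul_comm d m, div_eq_mul_inv, inv_pow]
    rw [hgoal]
    exact riesz_lb hd hm hℓ (fun j => (geom hd hm hℓ (hy j) hx).1)
      (fun j i => by rw [abs_sub_comm]; exact (geom hd hm hℓ (hy j) hx).2 i)
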